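/- Let q be a real number with q > 1 and let y be a real number with |y| < q^2. Then the family ((2/d)·y^d/(q^d − q^{−d})^2) indexed by positive odd integers d is summable, the family (m·log((1 + q^{−2m}y)/(1 − q^{−2m}y))) indexed by positive integers m is summable, and ∑_{d odd, d ≥ 1} (2/d)·y^d/(q^d − q^{−d})^2 = ∑_{m=1}^∞ m·log((1 + q^{−2m}y)/(1 − q^{−2m}y)). -/

import Mathlib

open Real

section OddLogAux

/-- The map `k ↦ 2k+1` from `ℕ` to positive odd naturals. -/
private def oddMap : ℕ → {d : ℕ // Odd d} := fun k => ⟨2 * k + 1, ⟨k, rfl⟩⟩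

private lemma oddMap_inj : Function.Injective oddMap := by
  intro a b h
  simp only [oddMap, Subtype.mk.injEq] at h
  have h' : 2 * a + 1 = 2 * b + 1 := congrArg Subtype.val h
  omega

private lemma oddMap_surj : Function.Surjective oddMap := by
  rintro ⟨d, k, hk⟩
  exact ⟨k, Subtype.ext hk.symm⟩

private lemma pnat_coe_inj : Function.Injective (fun m : ℕ+ => (m : ℕ)) :=
  fun a b h => PNat.coe_injective h

end OddLogAux

/-- For `q > 1` and real `y` with `|y| < q^2`, the family
`(2/d) * y^d / (q^d - q^{-d})^2` indexed by positive odd integers `d` is summable,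
the family `m * log((1 + q^(-2m) y)/(1 - q^(-2m) y))` indexed by positive integers `m`
is summable, and the two sums agree. -/
theorem odd_sum_eq_log_prod_sum_q_gt_one (q y : ℝ) (hq : 1 < q)
    (hy : |y| < q ^ 2) :
    Summable (fun d : {d : ℕ // Odd d} =>
      (2 / ((d : ℕ) : ℝ)) * y ^ (d : ℕ) / (q ^ (d : ℕ) - q⁻¹ ^ (d : ℕ)) ^ 2) ∧
    Summable (fun m : ℕ+ =>
      (m : ℝ) * Real.log ((1 + q⁻¹ ^ (2 * (m : ℕ)) * y) / (1 - q⁻¹ ^ (2 * (m : ℕ)) * y))) ∧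
    ∑' d : {d : ℕ // Odd d},
        (2 / ((d : ℕ) : ℝ)) * y ^ (d : ℕ) / (q ^ (d : ℕ) - q⁻¹ ^ (d : ℕ)) ^ 2 =
      ∑' m : ℕ+,
        (m : ℝ) * Real.log ((1 + q⁻¹ ^ (2 * (m : ℕ)) * y) / (1 - q⁻¹ ^ (2 * (m : ℕ)) * y)) := by
  have hq0 : (0:ℝ) < q := lt_trans zero_lt_one hq
  have hqne : q ≠ 0 := ne_of_gt hq0
  have hqi0 : (0:ℝ) < q⁻¹ := inv_pos.mpr hq0
  have hqi1 : q⁻¹ < 1 := inv_lt_one_of_one_lt₀ hq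
  set t : ℝ := q⁻¹ ^ 2 with ht_def
  have ht0 : 0 < t := by positivity
  have ht1 : t < 1 := by
    calc t < 1 ^ 2 := pow_lt_pow_left₀ hqi1 (le_of_lt hqi0) (by norm_num)
      _ = 1 := one_pow 2
  set r : ℝ := t * |y| with hr_def
  have hr0 : 0 ≤ r := by positivity
  have htq : t * q ^ 2 = 1 := by
    rw [ht_def, ← mul_pow, inv_mul_cancel₀ hqne, one_pow]
  have hr1 : r < 1 := by
    calc r < t * q ^ 2 := mul_lt_mul_of_pos_left hy ht0
      _ = 1 := htq
  -- the double family
  set F : {d : ℕ // Odd d} × ℕ+ → ℝ := fun p =>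
    2 / ((p.1 : ℕ) : ℝ) * (p.2 : ℝ) * (q⁻¹ ^ (2 * (p.2 : ℕ)) * y) ^ (p.1 : ℕ) with hF_def
  -- basic facts about u_m = q⁻¹ ^ (2m) * y
  have habs : ∀ m : ℕ+, |q⁻¹ ^ (2 * (m : ℕ)) * y| = t ^ ((m : ℕ) - 1) * r := by
    intro m
    obtain ⟨n, hn⟩ : ∃ n, (m : ℕ) = n + 1 := ⟨(m : ℕ) - 1, (Nat.succ_pred_eq_of_pos m.pos).symm⟩
    rw [abs_mul, abs_pow, abs_of_pos hqi0, hn]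
    simp only [Nat.add_sub_cancel, hr_def, ht_def]
    rw [pow_mul]
    ring
  have habs_le : ∀ m : ℕ+, |q⁻¹ ^ (2 * (m : ℕ)) * y| ≤ r := by
    intro m
    rw [habs m]
    calc t ^ ((m : ℕ) - 1) * r ≤ 1 * r :=
          mul_le_mul_of_nonneg_right (pow_le_one₀ (le_of_lt ht0) (le_of_lt ht1)) hr0
      _ = r := one_mul r
  have habs_lt : ∀ m : ℕ+, |q⁻¹ ^ (2 * (m : ℕ)) * y| < 1 :=
    fun m => lt_of_le_of_lt (habs_le m) hr1
  -- Summability of the double family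
  have hgsum : Summable (fun m : ℕ+ => 2 * (m : ℝ) * t ^ ((m : ℕ) - 1)) := by
    rw [← (Equiv.pnatEquivNat.symm).summable_iff]
    have h1 : Summable (fun n : ℕ => 2 * ((n : ℝ) * t ^ n)) := by
      apply Summable.mul_left
      have := summable_pow_mul_geometric_of_norm_lt_one (R := ℝ) 1
        (r := t) (by rwa [Real.norm_eq_abs, abs_of_pos ht0])
      simpa using this
    have h2 : Summable (fun n : ℕ => 2 * t ^ n) :=
      (summable_geometric_of_lt_one (le_of_lt ht0) ht1).mul_left 2
    have h3 : Summable (fun n : ℕ => 2 * ((n : ℝ) * t ^ n) + 2 * t ^ n) := h1.add h2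
    apply h3.congr
    intro n
    simp only [Function.comp_apply, Equiv.pnatEquivNat_symm_apply]
    have e1 : ((n.succPNat : ℕ) : ℝ) = (n : ℝ) + 1 := by simp [Nat.succPNat]
    have e2 : (n.succPNat : ℕ) - 1 = n := by simp [Nat.succPNat]
    rw [e1, e2]
    ring
  have hhsum : Summable (fun d : {d : ℕ // Odd d} => r ^ (d : ℕ)) :=
    (summable_geometric_of_lt_one hr0 hr1).comp_injective Subtype.val_injective
  have hGH : Summable (fun p : {d : ℕ // Odd d} × ℕ+ =>
      (r ^ (p.1 : ℕ)) * (2 * (p.2 : ℝ) * t ^ ((p.2 : ℕ) - 1))) := by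
    apply hhsum.mul_of_nonneg hgsum
    · intro d; positivity
    · intro m; positivity
  have hFabs : Summable (fun p : {d : ℕ // Odd d} × ℕ+ => |F p|) := by
    apply Summable.of_nonneg_of_le (fun p => abs_nonneg _) _ hGH
    rintro ⟨d, m⟩
    have hd1 : 1 ≤ (d : ℕ) := d.2.pos
    have hd1R : (1:ℝ) ≤ ((d : ℕ) : ℝ) := by exact_mod_cast hd1
    have hdpos : (0:ℝ) < ((d : ℕ) : ℝ) := lt_of_lt_of_le zero_lt_one hd1R
    have hm0 : (0:ℝ) ≤ (m : ℝ) := by positivity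
    calc |F (d, m)| = 2 / ((d : ℕ) : ℝ) * (m : ℝ) * |q⁻¹ ^ (2 * (m : ℕ)) * y| ^ (d : ℕ) := by
          rw [hF_def]
          simp only
          rw [abs_mul, abs_pow, abs_mul, abs_div, abs_of_pos hdpos]
          norm_num
      _ = 2 / ((d : ℕ) : ℝ) * (m : ℝ) * ((t ^ ((m : ℕ) - 1)) ^ (d : ℕ) * r ^ (d : ℕ)) := by
          rw [habs m, mul_pow]
      _ ≤ 2 / 1 * (m : ℝ) * ((t ^ ((m : ℕ) - 1)) ^ 1 * r ^ (d : ℕ)) := by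
          apply mul_le_mul
          · apply mul_le_mul_of_nonneg_right _ hm0
            apply div_le_div_of_nonneg_left (by norm_num) zero_lt_one hd1R
          · apply mul_le_mul_of_nonneg_right _ (by positivity)
            exact pow_le_pow_of_le_one (by positivity)
              (pow_le_one₀ (le_of_lt ht0) (le_of_lt ht1)) hd1
          · positivity
          · positivity
      _ = r ^ (d : ℕ) * (2 * (m : ℝ) * t ^ ((m : ℕ) - 1)) := by ring
  have hF : Summable F := by
    rw [← summable_abs_iff]; exact hFabs
  -- inner sum over m, for fixed odd d
  have HL : ∀ d : {d : ℕ // Odd d}, HasSum (fun m : ℕ+ => F (d, m))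
      (2 / ((d : ℕ) : ℝ) * y ^ (d : ℕ) / (q ^ (d : ℕ) - q⁻¹ ^ (d : ℕ)) ^ 2) := by
    intro d
    have hd1 : 1 ≤ (d : ℕ) := d.2.pos
    set x : ℝ := q⁻¹ ^ (2 * (d : ℕ)) with hx_def
    have hx0 : 0 < x := by positivity
    have hx1 : x < 1 := by
      rw [hx_def]
      exact pow_lt_one₀ (le_of_lt hqi0) hqi1 (by omega)
    have hgeo : HasSum (fun n : ℕ => (n : ℝ) * x ^ n) (x / (1 - x) ^ 2) :=
      hasSum_coe_mul_geometric_of_norm_lt_one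
        (by rwa [Real.norm_eq_abs, abs_of_pos hx0])
    have hgeo2 : HasSum (fun n : ℕ => 2 / ((d : ℕ) : ℝ) * y ^ (d : ℕ) * ((n : ℝ) * x ^ n))
        (2 / ((d : ℕ) : ℝ) * y ^ (d : ℕ) * (x / (1 - x) ^ 2)) := hgeo.mul_left _
    have key : HasSum (fun m : ℕ+ => F (d, m))
        (2 / ((d : ℕ) : ℝ) * y ^ (d : ℕ) * (x / (1 - x) ^ 2)) := by
      have hrange : ∀ n : ℕ, n ∉ Set.range (fun m : ℕ+ => (m : ℕ)) →
          2 / ((d : ℕ) : ℝ) * y ^ (d : ℕ) * ((n : ℝ) * x ^ n) = 0 := by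
        intro n hn
        have : n = 0 := by
          by_contra h
          exact hn ⟨⟨n, Nat.pos_of_ne_zero h⟩, rfl⟩
        simp [this]
      have h := (pnat_coe_inj.hasSum_iff hrange).mpr hgeo2
      apply h.congr_fun
      intro m
      have hpow : (q⁻¹ ^ (2 * (m : ℕ)) * y) ^ (d : ℕ) = x ^ (m : ℕ) * y ^ (d : ℕ) := by
        rw [mul_pow, hx_def, ← pow_mul, ← pow_mul, Nat.mul_right_comm]
      show F (d, m) = 2 / ((d : ℕ) : ℝ) * y ^ (d : ℕ) * (((m : ℕ) : ℝ) * x ^ (m : ℕ))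
      simp only [hF_def]
      rw [hpow]
      ring
    -- now identify the sum value
    have hab : q ^ (d : ℕ) * q⁻¹ ^ (d : ℕ) = 1 := by
      rw [← mul_pow, mul_inv_cancel₀ hqne, one_pow]
    have hxb : x = (q⁻¹ ^ (d : ℕ)) ^ 2 := by
      rw [hx_def, ← pow_mul, mul_comm]
    have h1x : (1 - x) ^ 2 = (q ^ (d : ℕ) - q⁻¹ ^ (d : ℕ)) ^ 2 * x := by
      have : 1 - x = (q ^ (d : ℕ) - q⁻¹ ^ (d : ℕ)) * q⁻¹ ^ (d : ℕ) := by
        rw [hxb, sub_mul, hab]; ring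
      rw [this, mul_pow, ← hxb]
    have hval : 2 / ((d : ℕ) : ℝ) * y ^ (d : ℕ) * (x / (1 - x) ^ 2) =
        2 / ((d : ℕ) : ℝ) * y ^ (d : ℕ) / (q ^ (d : ℕ) - q⁻¹ ^ (d : ℕ)) ^ 2 := by
      have hc : q ^ (d : ℕ) - q⁻¹ ^ (d : ℕ) ≠ 0 := by
        have h1 : (1:ℝ) < q ^ (d : ℕ) := one_lt_pow₀ hq (by omega)
        have h2 : q⁻¹ ^ (d : ℕ) < 1 := pow_lt_one₀ (le_of_lt hqi0) hqi1 (by omega)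
        nlinarith
      have hxx : x / (1 - x) ^ 2 = 1 / (q ^ (d : ℕ) - q⁻¹ ^ (d : ℕ)) ^ 2 := by
        rw [h1x, mul_comm, ← div_div, div_self (ne_of_gt hx0)]
      rw [hxx, mul_one_div]
    rw [← hval]
    exact key
  -- inner sum over d, for fixed m
  have HR : ∀ m : ℕ+, HasSum (fun d : {d : ℕ // Odd d} => F (d, m))
      ((m : ℝ) * Real.log ((1 + q⁻¹ ^ (2 * (m : ℕ)) * y) / (1 - q⁻¹ ^ (2 * (m : ℕ)) * y))) := by
    intro m
    set u : ℝ := q⁻¹ ^ (2 * (m : ℕ)) * y with hu_def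
    have hu : |u| < 1 := habs_lt m
    have hu1 : -1 < u ∧ u < 1 := abs_lt.mp hu
    have h1u : (0:ℝ) < 1 + u := by linarith [hu1.1]
    have h2u : (0:ℝ) < 1 - u := by linarith [hu1.2]
    have hlog : HasSum (fun k : ℕ => (m : ℝ) * ((2:ℝ) * (1 / (2 * (k:ℝ) + 1)) * u ^ (2 * k + 1)))
        ((m : ℝ) * (Real.log (1 + u) - Real.log (1 - u))) :=
      (Real.hasSum_log_sub_log_of_abs_lt_one hu).mul_left _
    have key : HasSum (fun d : {d : ℕ // Odd d} => F (d, m))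
        ((m : ℝ) * (Real.log (1 + u) - Real.log (1 - u))) := by
      have hrange : ∀ x : {d : ℕ // Odd d}, x ∉ Set.range oddMap → F (x, m) = 0 :=
        fun x hx => absurd (oddMap_surj x) hx
      apply (oddMap_inj.hasSum_iff hrange).mp
      apply hlog.congr_fun
      intro k
      show F (oddMap k, m) = (m : ℝ) * ((2:ℝ) * (1 / (2 * (k:ℝ) + 1)) * u ^ (2 * k + 1))
      simp only [hF_def, oddMap, hu_def]
      push_cast
      ring
    have hval : (m : ℝ) * (Real.log (1 + u) - Real.log (1 - u)) =
        (m : ℝ) * Real.log ((1 + u) / (1 - u)) := by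
      rw [Real.log_div (ne_of_gt h1u) (ne_of_gt h2u)]
    rw [← hval]
    exact key
  -- assemble
  have hSumL : Summable (fun d : {d : ℕ // Odd d} =>
      (2 / ((d : ℕ) : ℝ)) * y ^ (d : ℕ) / (q ^ (d : ℕ) - q⁻¹ ^ (d : ℕ)) ^ 2) :=
    hF.prod.congr fun d => (HL d).tsum_eq
  have hSumR : Summable (fun m : ℕ+ =>
      (m : ℝ) * Real.log ((1 + q⁻¹ ^ (2 * (m : ℕ)) * y) / (1 - q⁻¹ ^ (2 * (m : ℕ)) * y))) :=
    hF.prod_symm.prod.congr fun m => (HR m).tsum_eq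
  refine ⟨hSumL, hSumR, ?_⟩
  calc ∑' d : {d : ℕ // Odd d},
        (2 / ((d : ℕ) : ℝ)) * y ^ (d : ℕ) / (q ^ (d : ℕ) - q⁻¹ ^ (d : ℕ)) ^ 2
      = ∑' (d : {d : ℕ // Odd d}) (m : ℕ+), F (d, m) :=
        tsum_congr fun d => ((HL d).tsum_eq).symm
    _ = ∑' (m : ℕ+) (d : {d : ℕ // Odd d}), F (d, m) :=
        (Summable.tsum_comm (f := fun d m => F (d, m)) hF).symm
    _ = ∑' m : ℕ+,
        (m : ℝ) * Real.log ((1 + q⁻¹ ^ (2 * (m : ℕ)) * y) / (1 - q⁻¹ ^ (2 * (m : ℕ)) * y)) :=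
        tsum_congr fun m => (HR m).tsum_eq
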